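/- Let (X₁,Y₁) and (X₂,Y₂) be pairs of jointly distributed random variables, with X₁,X₂ supported on a finite set 𝒳 and Y₁,Y₂ supported on a finite set 𝒴. Let δ = Δ((X₁,Y₁),(X₂,Y₂)) be the total variation distance of the joint distributions. Then |H(X₁|Y₁) - H(X₂|Y₂)| ≤ 1 + 6δ·log₂|𝒳|. -/

import Mathlib

set_option maxHeartbeats 1000000


open Finset

noncomputable section

/-- `p` is a probability mass function on the finite type `Ω`. -/
def IsPMF {Ω : Type*} [Fintype Ω] (p : Ω → ℝ) : Prop :=
  (∀ ω, 0 ≤ p ω) ∧ ∑ ω, p ω = 1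

/-- Probability that the random variable `X` equals `x` under `p`. -/
def pr {Ω α : Type*} [Fintype Ω] [DecidableEq α] (p : Ω → ℝ) (X : Ω → α) (x : α) : ℝ :=
  ∑ ω, if X ω = x then p ω else 0

/-- Shannon entropy (base 2) of a distribution `q` on a finite type. -/
def Hq {α : Type*} [Fintype α] (q : α → ℝ) : ℝ :=
  ∑ x, -(q x * Real.logb 2 (q x))

/-- Shannon entropy (base 2) of the random variable `X` under `p`. -/
def Hent {Ω α : Type*} [Fintype Ω] [Fintype α] [DecidableEq α] (p : Ω → ℝ) (X : Ω → α) : ℝ :=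
  Hq (pr p X)

/-- Conditional entropy `H(X|Y) = H(X,Y) - H(Y)`. -/
def condH {Ω α β : Type*} [Fintype Ω] [Fintype α] [Fintype β] [DecidableEq α] [DecidableEq β]
    (p : Ω → ℝ) (X : Ω → α) (Y : Ω → β) : ℝ :=
  Hent p (fun ω => (X ω, Y ω)) - Hent p Y

/-- Mutual information `I(X;Y)`. -/
def MI {Ω α β : Type*} [Fintype Ω] [Fintype α] [Fintype β] [DecidableEq α] [DecidableEq β]
    (p : Ω → ℝ) (X : Ω → α) (Y : Ω → β) : ℝ :=
  Hent p X + Hent p Y - Hent p (fun ω => (X ω, Y ω))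

/-- Conditional mutual information `I(X;Y|Z) = H(X|Z) - H(X|(Y,Z))`. -/
def condMI {Ω α β γ : Type*} [Fintype Ω] [Fintype α] [Fintype β] [Fintype γ]
    [DecidableEq α] [DecidableEq β] [DecidableEq γ]
    (p : Ω → ℝ) (X : Ω → α) (Y : Ω → β) (Z : Ω → γ) : ℝ :=
  condH p X Z - condH p X (fun ω => (Y ω, Z ω))

/-- Total variation distance between distributions on a finite type. -/
def TV {α : Type*} [Fintype α] (q₁ q₂ : α → ℝ) : ℝ :=
  (∑ x, |q₁ x - q₂ x|) / 2

/-- Binary entropy function (base 2). -/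
def binEnt (d : ℝ) : ℝ :=
  -(d * Real.logb 2 d) - ((1 - d) * Real.logb 2 (1 - d))

/-- Min-entropy (base 2) of a distribution on a nonempty finite type. -/
def Hinf {α : Type*} [Fintype α] [Nonempty α] (q : α → ℝ) : ℝ :=
  -Real.logb 2 (⨆ x, q x)

section
namespace Stmt6Aux
open Real

/-- `-(x * log₂ x)`, the summand of Shannon entropy. -/
def nml (x : ℝ) : ℝ := -(x * Real.logb 2 x)

@[simp] lemma nml_zero : nml 0 = 0 := by simp [nml]
@[simp] lemma nml_one : nml 1 = 0 := by simp [nml]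

lemma nml_eq_log (x : ℝ) : nml x = -(x * Real.log x) / Real.log 2 := by
  simp [nml, Real.logb, div_eq_mul_inv]; ring

lemma nml_nonneg {x : ℝ} (h0 : 0 ≤ x) (h1 : x ≤ 1) : 0 ≤ nml x := by
  have := Real.logb_nonpos (b := 2) one_lt_two h0 h1
  have : x * Real.logb 2 x ≤ 0 := mul_nonpos_of_nonneg_of_nonpos h0 this
  simp [nml]; linarith

lemma nml_le_one {x : ℝ} (h0 : 0 ≤ x) (h1 : x ≤ 1) : nml x ≤ 1 := by
  have hlog2 : (0.6931471803 : ℝ) < Real.log 2 := Real.log_two_gt_d9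
  have h2 : 0 < Real.log 2 := by linarith
  rw [nml_eq_log, div_le_one h2]
  rcases eq_or_lt_of_le h0 with h | hx
  · simp [← h]; linarith
  · have hs : Real.log x = 2 * Real.log (Real.sqrt x) := by
      rw [Real.log_sqrt h0]; ring
    have hsx : 0 < Real.sqrt x := Real.sqrt_pos.2 hx
    have hinv : Real.log (Real.sqrt x)⁻¹ ≤ (Real.sqrt x)⁻¹ - 1 :=
      Real.log_le_sub_one_of_pos (by positivity)
    rw [Real.log_inv] at hinv
    -- -(x * log x) = 2 * x * (-(log √x)) ≤ 2 * x * ((√x)⁻¹ - 1) = 2*(√x - x)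
    have hxx : x = Real.sqrt x * Real.sqrt x := (Real.mul_self_sqrt h0).symm
    have hb : x * (Real.sqrt x)⁻¹ = Real.sqrt x := by
      rw [hxx]; field_simp; rw [Real.sqrt_sq hsx.le]
    have key : -(x * Real.log x) ≤ 2 * (Real.sqrt x - x) := by
      have := mul_le_mul_of_nonneg_left hinv (le_of_lt hx)
      calc -(x * Real.log x) = 2 * (x * (-Real.log (Real.sqrt x))) := by rw [hs]; ring
        _ ≤ 2 * (x * ((Real.sqrt x)⁻¹ - 1)) := by linarith
        _ = 2 * (Real.sqrt x - x) := by rw [mul_sub, hb]; ring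
    have sq : Real.sqrt x - x ≤ 1/4 := by nlinarith [sq_nonneg (Real.sqrt x - 1/2), hxx]
    linarith

/-- Pointwise bound, increasing side. -/
lemma ptA {p q : ℝ} (hp : 0 ≤ p) (hpq : p ≤ q) (hq1 : q ≤ 1) :
    -(p * Real.log p) + q * Real.log q ≤ q - p := by
  rcases eq_or_lt_of_le hp with h | hp0
  · have hq0 : 0 ≤ q := le_trans hp hpq
    have := Real.log_nonpos hq0 hq1
    have : q * Real.log q ≤ 0 := mul_nonpos_of_nonneg_of_nonpos hq0 this
    simp [← h]; linarith
  · have hq0 : 0 < q := lt_of_lt_of_le hp0 hpq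
    have h1 : Real.log (q / p) ≤ q / p - 1 := Real.log_le_sub_one_of_pos (by positivity)
    rw [Real.log_div (ne_of_gt hq0) (ne_of_gt hp0)] at h1
    have h1' : p * (Real.log q - Real.log p) ≤ q - p := by
      have := mul_le_mul_of_nonneg_left h1 (le_of_lt hp0)
      have hqp : p * (q / p - 1) = q - p := by field_simp
      linarith [this, hqp ▸ this]
    have h2 : (q - p) * Real.log q ≤ 0 :=
      mul_nonpos_of_nonneg_of_nonpos (by linarith) (Real.log_nonpos (le_of_lt hq0) hq1)
    nlinarith [h1', h2]

/-- Pointwise bound, decreasing side. -/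
lemma ptB {p q : ℝ} (hq : 0 ≤ q) (hqp : q < p) :
    -(p * Real.log p) + q * Real.log q ≤ -((p - q) * Real.log (p - q)) := by
  rcases eq_or_lt_of_le hq with h | hq0
  · simp [← h]
  · have hp0 : 0 < p := lt_trans hq0 hqp
    have h1 : Real.log (p - q) ≤ Real.log p := Real.log_le_log (by linarith) (by linarith)
    have h2 : Real.log q ≤ Real.log p := Real.log_le_log hq0 (le_of_lt hqp)
    nlinarith [mul_le_mul_of_nonneg_left h1 (show (0:ℝ) ≤ p - q by linarith),
      mul_le_mul_of_nonneg_left h2 (le_of_lt hq0)]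


variable {𝒳 : Type*} [Fintype 𝒳]

/-- "Jensen": `∑ nml (c x) ≤ (∑ c) * log₂ d + nml (∑ c)` for nonnegative `c`. -/
lemma sum_nml_le [Nonempty 𝒳] (c : 𝒳 → ℝ) (hc : ∀ x, 0 ≤ c x) :
    ∑ x, nml (c x) ≤ (∑ x, c x) * Real.logb 2 (Fintype.card 𝒳) + nml (∑ x, c x) := by
  have hlog2 : (0:ℝ) < Real.log 2 := Real.log_pos one_lt_two
  set S := ∑ x, c x with hS
  set d : ℝ := (Fintype.card 𝒳 : ℝ) with hd
  have hd0 : 0 < d := by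
    have := Fintype.card_pos (α := 𝒳)
    simp only [hd]
    exact_mod_cast this
  rcases eq_or_lt_of_le (Finset.sum_nonneg (fun x (_ : x ∈ univ) => hc x)) with h0 | hS0
  · have hall : ∀ x ∈ Finset.univ, c x = 0 :=
      (Finset.sum_eq_zero_iff_of_nonneg (fun x _ => hc x)).1 h0.symm
    have heq : ∀ x ∈ Finset.univ, nml (c x) = 0 := fun x hx => by
      rw [hall x hx]; simp [nml]
    have hS' : S = 0 := hS.trans h0.symm
    rw [Finset.sum_congr rfl heq, hS']
    simp [nml]
  · rw [← hS] at hS0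
    have key : ∀ x, nml (c x) ≤
        c x * (Real.logb 2 d - Real.logb 2 S) + (S / d - c x) / Real.log 2 := by
      intro x
      rcases eq_or_lt_of_le (hc x) with h | hcx
      · rw [← h]; simp [nml]; positivity
      · have h1 : Real.log (S / (d * c x)) ≤ S / (d * c x) - 1 :=
          Real.log_le_sub_one_of_pos (by positivity)
        have h2 : c x * Real.log (S / (d * c x)) ≤ S / d - c x := by
          have hmul := mul_le_mul_of_nonneg_left h1 (le_of_lt hcx)
          have he : c x * (S / (d * c x) - 1) = S / d - c x := by field_simp
          linarith [he ▸ hmul]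
        have h3 : Real.log (S / (d * c x)) =
            Real.log S - Real.log d - Real.log (c x) := by
          rw [Real.log_div (ne_of_gt hS0) (by positivity),
            Real.log_mul (ne_of_gt hd0) (ne_of_gt hcx)]
          ring
        rw [h3] at h2
        have goal' : -(c x * Real.log (c x)) ≤
            c x * (Real.log d - Real.log S) + (S / d - c x) := by nlinarith [h2]
        have hn : nml (c x) = -(c x * Real.log (c x)) / Real.log 2 := by
          simp [nml, Real.logb, div_eq_mul_inv]; ring
        have hrw : c x * (Real.logb 2 d - Real.logb 2 S) + (S / d - c x) / Real.log 2
            = (c x * (Real.log d - Real.log S) + (S / d - c x)) / Real.log 2 := by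
          simp [Real.logb, div_eq_mul_inv]; ring
        rw [hn, hrw]
        exact (div_le_div_iff_of_pos_right hlog2).mpr goal'
    calc ∑ x, nml (c x)
        ≤ ∑ x, (c x * (Real.logb 2 d - Real.logb 2 S) + (S / d - c x) / Real.log 2) :=
          Finset.sum_le_sum (fun x _ => key x)
      _ = S * (Real.logb 2 d - Real.logb 2 S)
          + (∑ x, (S / d - c x)) / Real.log 2 := by
          rw [Finset.sum_add_distrib, ← Finset.sum_mul, ← Finset.sum_div, ← hS]
      _ = S * Real.logb 2 d + nml S := by
          have : ∑ x, (S / d - c x) = 0 := by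
            rw [Finset.sum_sub_distrib, Finset.sum_const, ← hS, Finset.card_univ,
              nsmul_eq_mul, ← hd]
            field_simp
            ring
          rw [this]
          simp [nml]
          ring

/-- Core continuity bound for entropy of pmfs. -/
lemma core [Nonempty 𝒳] (P Q : 𝒳 → ℝ) (hP0 : ∀ x, 0 ≤ P x) (hP1 : ∑ x, P x = 1)
    (hQ0 : ∀ x, 0 ≤ Q x) (hQ1 : ∑ x, Q x = 1)
    (hL : 1 ≤ Real.log 2 * Real.logb 2 (Fintype.card 𝒳)) :
    ∑ x, nml (P x) - ∑ x, nml (Q x) ≤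
      (∑ x, |P x - Q x|) * Real.logb 2 (Fintype.card 𝒳) + 1 := by
  have hlog2 : (0:ℝ) < Real.log 2 := Real.log_pos one_lt_two
  set L := Real.logb 2 (Fintype.card 𝒳) with hLdef
  have hL0 : 0 < L := by nlinarith
  have hPle1 : ∀ x, P x ≤ 1 := fun x => by
    rw [← hP1]; exact Finset.single_le_sum (fun i _ => hP0 i) (mem_univ x)
  have hQle1 : ∀ x, Q x ≤ 1 := fun x => by
    rw [← hQ1]; exact Finset.single_le_sum (fun i _ => hQ0 i) (mem_univ x)
  set g1 : 𝒳 → ℝ := fun x => max (Q x - P x) 0 with hg1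
  set g2 : 𝒳 → ℝ := fun x => max (P x - Q x) 0 with hg2
  have hg1nn : ∀ x, 0 ≤ g1 x := fun x => le_max_right _ _
  have hg2nn : ∀ x, 0 ≤ g2 x := fun x => le_max_right _ _
  have hpt : ∀ x, nml (P x) - nml (Q x) ≤ g1 x / Real.log 2 + nml (g2 x) := by
    intro x
    rcases le_or_gt (P x) (Q x) with h | h
    · have e2 : g2 x = 0 := max_eq_right (by linarith)
      have e1 : g1 x = Q x - P x := max_eq_left (by linarith)
      have := ptA (hP0 x) h (hQle1 x)
      rw [e1, e2, nml_eq_log, nml_eq_log]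
      simp [nml]
      rw [← add_div, div_le_div_iff_of_pos_right hlog2]
      linarith
    · have e1 : g1 x = 0 := max_eq_right (by linarith)
      have e2 : g2 x = P x - Q x := max_eq_left (by linarith)
      have := ptB (hQ0 x) h
      rw [e1, e2, nml_eq_log, nml_eq_log, nml_eq_log]
      simp only [zero_div, zero_add]
      rw [div_sub_div_same, div_le_div_iff_of_pos_right hlog2]
      linarith
  have hsum2 : ∑ x, nml (g2 x) ≤ (∑ x, g2 x) * L + 1 := by
    have h1 := sum_nml_le g2 hg2nn
    have hle : ∑ x, g2 x ≤ 1 := by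
      rw [← hP1]
      refine Finset.sum_le_sum (fun x _ => ?_)
      have : P x - Q x ≤ P x := by linarith [hQ0 x]
      exact max_le this (hP0 x)
    have := nml_le_one (Finset.sum_nonneg (fun x _ => hg2nn x)) hle
    linarith
  have hsum1 : (∑ x, g1 x) / Real.log 2 ≤ (∑ x, g1 x) * L := by
    have hnn : 0 ≤ ∑ x, g1 x := Finset.sum_nonneg (fun x _ => hg1nn x)
    rw [div_le_iff₀ hlog2]
    nlinarith
  have habs : ∑ x, g1 x + ∑ x, g2 x = ∑ x, |P x - Q x| := by
    rw [← Finset.sum_add_distrib]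
    refine Finset.sum_congr rfl (fun x _ => ?_)
    have := max_zero_add_max_neg_zero_eq_abs_self (P x - Q x)
    simp only [hg1, hg2, neg_sub] at *
    linarith
  calc ∑ x, nml (P x) - ∑ x, nml (Q x) = ∑ x, (nml (P x) - nml (Q x)) := by
        rw [Finset.sum_sub_distrib]
    _ ≤ ∑ x, (g1 x / Real.log 2 + nml (g2 x)) := Finset.sum_le_sum (fun x _ => hpt x)
    _ = (∑ x, g1 x) / Real.log 2 + ∑ x, nml (g2 x) := by
        rw [Finset.sum_add_distrib, Finset.sum_div]
    _ ≤ (∑ x, g1 x) * L + ((∑ x, g2 x) * L + 1) := by linarith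
    _ = (∑ x, |P x - Q x|) * L + 1 := by rw [← habs]; ring

/-- Weighted entropy of a subdistribution. -/
def Gd (u : 𝒳 → ℝ) : ℝ := ∑ x, nml (u x) - nml (∑ x, u x)

lemma Gd_nonneg (u : 𝒳 → ℝ) (hu : ∀ x, 0 ≤ u x) : 0 ≤ Gd u := by
  have key : ∀ x, u x * Real.logb 2 (u x) ≤ u x * Real.logb 2 (∑ x, u x) := by
    intro x
    rcases eq_or_lt_of_le (hu x) with h | h
    · rw [← h]; simp
    · refine mul_le_mul_of_nonneg_left ?_ (hu x)
      exact Real.logb_le_logb_of_le one_lt_two h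
        (Finset.single_le_sum (fun i _ => hu i) (mem_univ x))
  have h3 : ∑ x, u x * Real.logb 2 (u x) ≤ ∑ x, u x * Real.logb 2 (∑ x, u x) :=
    Finset.sum_le_sum (fun x _ => key x)
  have h5 : (∑ x, u x) * Real.logb 2 (∑ x, u x) = ∑ x, u x * Real.logb 2 (∑ x, u x) :=
    Finset.sum_mul _ _ _
  unfold Gd nml
  rw [Finset.sum_neg_distrib]
  linarith [h3, h5]

lemma Gd_le [Nonempty 𝒳] (u : 𝒳 → ℝ) (hu : ∀ x, 0 ≤ u x) :
    Gd u ≤ (∑ x, u x) * Real.logb 2 (Fintype.card 𝒳) := by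
  have := sum_nml_le u hu
  unfold Gd; linarith

lemma nml_mul {c t : ℝ} (hc : c ≠ 0) (ht : t ≠ 0) :
    nml (c * t) = c * nml t + t * nml c := by
  simp [nml, Real.logb_mul hc ht]; ring

lemma G_scale (u : 𝒳 → ℝ) (hS : 0 < ∑ x, u x) :
    (∑ x, u x) * ∑ x, nml ((∑ x, u x)⁻¹ * u x) = Gd u := by
  set m := ∑ x, u x with hm
  have hm0 : m ≠ 0 := ne_of_gt hS
  have key : ∀ x, nml (m⁻¹ * u x) = m⁻¹ * nml (u x) + u x * nml m⁻¹ := by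
    intro x
    rcases eq_or_ne (u x) 0 with h | h
    · simp [h, nml]
    · exact nml_mul (inv_ne_zero hm0) h
  rw [Finset.sum_congr rfl (fun x _ => key x), Finset.sum_add_distrib, ← Finset.mul_sum,
    ← Finset.sum_mul, ← hm]
  have hinv : nml m⁻¹ = m⁻¹ * Real.logb 2 m := by
    simp [nml, Real.logb_inv]
  unfold Gd
  rw [hinv, ← hm]
  field_simp [nml]
  simp only [nml]
  ring

/-- Key per-fiber lemma. -/
lemma keyG [Nonempty 𝒳] (hL : 1 ≤ Real.log 2 * Real.logb 2 (Fintype.card 𝒳))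
    (u v : 𝒳 → ℝ) (hu : ∀ x, 0 ≤ u x) (hv : ∀ x, 0 ≤ v x) :
    Gd u - Gd v ≤ (∑ x, |u x - v x| + 2 * |(∑ x, u x) - ∑ x, v x|)
      * Real.logb 2 (Fintype.card 𝒳) + ∑ x, v x := by
  have hlog2 : (0:ℝ) < Real.log 2 := Real.log_pos one_lt_two
  set L := Real.logb 2 (Fintype.card 𝒳) with hLdef
  have hL0 : 0 < L := by nlinarith
  set m := ∑ x, u x with hm
  set n := ∑ x, v x with hn
  set s := ∑ x, |u x - v x| with hs
  have hm0 : 0 ≤ m := Finset.sum_nonneg (fun x _ => hu x)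
  have hn0 : 0 ≤ n := Finset.sum_nonneg (fun x _ => hv x)
  have hs0 : 0 ≤ s := Finset.sum_nonneg (fun x _ => abs_nonneg _)
  rcases eq_or_lt_of_le hm0 with hm' | hm'
  · -- m = 0 : u ≡ 0
    have hall : ∀ x ∈ Finset.univ, u x = 0 :=
      (Finset.sum_eq_zero_iff_of_nonneg (fun x _ => hu x)).1 hm'.symm
    have hGu : Gd u = 0 := by
      unfold Gd
      rw [Finset.sum_congr rfl (fun x hx => by rw [hall x hx]), ← hm, ← hm']
      simp [nml]
    have := Gd_nonneg v hv
    have habs : 0 ≤ |m - n| := abs_nonneg _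
    nlinarith
  · rcases eq_or_lt_of_le hn0 with hn' | hn'
    · -- n = 0 : v ≡ 0
      have hall : ∀ x ∈ Finset.univ, v x = 0 :=
        (Finset.sum_eq_zero_iff_of_nonneg (fun x _ => hv x)).1 hn'.symm
      have hGv : Gd v = 0 := by
        unfold Gd
        rw [Finset.sum_congr rfl (fun x hx => by rw [hall x hx]), ← hn, ← hn']
        simp [nml]
      have hsm : s = m := by
        rw [hs, hm]
        refine Finset.sum_congr rfl (fun x hx => ?_)
        rw [hall x hx, sub_zero, abs_of_nonneg (hu x)]
      have hGu := Gd_le u hu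
      rw [← hm, ← hLdef] at hGu
      have habs : |m - n| = m := by rw [← hn']; simp [abs_of_nonneg hm0]
      rw [hGv, habs, hsm, ← hn']
      nlinarith
    · -- m, n > 0
      set P : 𝒳 → ℝ := fun x => m⁻¹ * u x with hP
      set Q : 𝒳 → ℝ := fun x => n⁻¹ * v x with hQ
      have hP0 : ∀ x, 0 ≤ P x := fun x =>
        mul_nonneg (inv_nonneg.mpr hm0) (hu x)
      have hQ0 : ∀ x, 0 ≤ Q x := fun x =>
        mul_nonneg (inv_nonneg.mpr hn0) (hv x)
      have hP1 : ∑ x, P x = 1 := by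
        simp only [hP]; rw [← Finset.mul_sum, ← hm, inv_mul_cancel₀ (ne_of_gt hm')]
      have hQ1 : ∑ x, Q x = 1 := by
        simp only [hQ]; rw [← Finset.mul_sum, ← hn, inv_mul_cancel₀ (ne_of_gt hn')]
      have hGu : Gd u = m * ∑ x, nml (P x) := by
        rw [← G_scale u (hm ▸ hm'), ← hm]
      have hGv : Gd v = n * ∑ x, nml (Q x) := by
        rw [← G_scale v (hn ▸ hn'), ← hn]
      have hHP0 : 0 ≤ ∑ x, nml (P x) :=
        Finset.sum_nonneg (fun x _ => nml_nonneg (hP0 x)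
          (by rw [← hP1]; exact Finset.single_le_sum (fun i _ => hP0 i) (mem_univ x)))
      have hHQ0 : 0 ≤ ∑ x, nml (Q x) :=
        Finset.sum_nonneg (fun x _ => nml_nonneg (hQ0 x)
          (by rw [← hQ1]; exact Finset.single_le_sum (fun i _ => hQ0 i) (mem_univ x)))
      have hHPL : ∑ x, nml (P x) ≤ L := by
        have := sum_nml_le P hP0
        rw [hP1, ← hLdef] at this
        simpa [nml] using this
      have hcore : ∑ x, nml (P x) - ∑ x, nml (Q x) ≤ (∑ x, |P x - Q x|) * L + 1 := by
        rw [hLdef]; exact core P Q hP0 hP1 hQ0 hQ1 (hLdef ▸ hL)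
      rcases le_or_gt m n with hmn | hmn
      · -- m ≤ n
        have habs : |m - n| = n - m := by rw [abs_of_nonpos (by linarith)]; ring
        have bound1 : m * ∑ x, |P x - Q x| ≤ s + (n - m) := by
          rw [Finset.mul_sum]
          have hper : ∀ x, m * |P x - Q x| ≤ |u x - v x| + (v x - m * n⁻¹ * v x) := by
            intro x
            have h1 : m * |P x - Q x| = |u x - m * n⁻¹ * v x| := by
              have hrw : u x - m * n⁻¹ * v x = m * (P x - Q x) := by
                simp only [hP, hQ]
                field_simp
              rw [hrw, abs_mul, abs_of_nonneg hm0]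
            have h2 : |u x - m * n⁻¹ * v x| ≤ |u x - v x| + |v x - m * n⁻¹ * v x| :=
              abs_sub_le _ _ _
            have h3 : |v x - m * n⁻¹ * v x| = v x - m * n⁻¹ * v x := by
              apply abs_of_nonneg
              have : m * n⁻¹ ≤ 1 := by
                rw [← mul_inv_cancel₀ (ne_of_gt hn')]
                exact mul_le_mul_of_nonneg_right hmn (by positivity)
              nlinarith [hv x]
            rw [h1]; rw [h3] at h2; exact h2
          calc ∑ x, m * |P x - Q x| ≤ ∑ x, (|u x - v x| + (v x - m * n⁻¹ * v x)) :=
                Finset.sum_le_sum (fun x _ => hper x)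
            _ = s + (n - m * n⁻¹ * n) := by
                rw [Finset.sum_add_distrib, ← hs, Finset.sum_sub_distrib, ← hn,
                  ← Finset.mul_sum, ← hn]
            _ = s + (n - m) := by
                rw [mul_assoc, inv_mul_cancel₀ (ne_of_gt hn'), mul_one]
        have step : Gd u - Gd v ≤ m * (∑ x, |P x - Q x|) * L + m := by
          rw [hGu, hGv]
          have h4 : m * (∑ x, nml (P x)) - n * (∑ x, nml (Q x))
              ≤ m * ((∑ x, nml (P x)) - ∑ x, nml (Q x)) := by nlinarith
          nlinarith [mul_le_mul_of_nonneg_left hcore (le_of_lt hm')]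
        have : m * (∑ x, |P x - Q x|) * L ≤ (s + (n - m)) * L :=
          mul_le_mul_of_nonneg_right bound1 (le_of_lt (by positivity))
        rw [habs]
        nlinarith
      · -- n < m
        have habs : |m - n| = m - n := abs_of_nonneg (by linarith)
        have bound2 : n * ∑ x, |P x - Q x| ≤ s + (m - n) := by
          rw [Finset.mul_sum]
          have hper : ∀ x, n * |P x - Q x| ≤ (u x - n * m⁻¹ * u x) + |u x - v x| := by
            intro x
            have h1 : n * |P x - Q x| = |n * m⁻¹ * u x - v x| := by
              have hrw : n * m⁻¹ * u x - v x = n * (P x - Q x) := by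
                simp only [hP, hQ]
                field_simp
              rw [hrw, abs_mul, abs_of_nonneg hn0]
            have h2 : |n * m⁻¹ * u x - v x| ≤ |n * m⁻¹ * u x - u x| + |u x - v x| :=
              abs_sub_le _ _ _
            have h3 : |n * m⁻¹ * u x - u x| = u x - n * m⁻¹ * u x := by
              rw [abs_sub_comm]
              apply abs_of_nonneg
              have : n * m⁻¹ ≤ 1 := by
                rw [← mul_inv_cancel₀ (ne_of_gt hm')]
                exact mul_le_mul_of_nonneg_right (le_of_lt hmn) (by positivity)
              nlinarith [hu x]
            rw [h1]; rw [h3] at h2; exact h2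
          calc ∑ x, n * |P x - Q x| ≤ ∑ x, ((u x - n * m⁻¹ * u x) + |u x - v x|) :=
                Finset.sum_le_sum (fun x _ => hper x)
            _ = (m - n * m⁻¹ * m) + s := by
                rw [Finset.sum_add_distrib, ← hs, Finset.sum_sub_distrib, ← hm,
                  ← Finset.mul_sum, ← hm]
            _ = s + (m - n) := by
                rw [mul_assoc, inv_mul_cancel₀ (ne_of_gt hm'), mul_one]; ring
        have step : Gd u - Gd v ≤ n * (∑ x, |P x - Q x|) * L + n + (m - n) * L := by
          rw [hGu, hGv]
          have h4 : m * (∑ x, nml (P x)) - n * (∑ x, nml (Q x))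
              = n * ((∑ x, nml (P x)) - ∑ x, nml (Q x)) + (m - n) * (∑ x, nml (P x)) := by
            ring
          rw [h4]
          have h5 : (m - n) * (∑ x, nml (P x)) ≤ (m - n) * L :=
            mul_le_mul_of_nonneg_left hHPL (by linarith)
          nlinarith [mul_le_mul_of_nonneg_left hcore (le_of_lt hn')]
        have : n * (∑ x, |P x - Q x|) * L ≤ (s + (m - n)) * L :=
          mul_le_mul_of_nonneg_right bound2 (le_of_lt (by positivity))
        rw [habs]
        nlinarith

section Plumb
variable {Ω 𝒳 𝒴 : Type*} [Fintype Ω] [Fintype 𝒳] [Fintype 𝒴] [DecidableEq 𝒳] [DecidableEq 𝒴]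

lemma pr_nonneg {α : Type*} [DecidableEq α] (p : Ω → ℝ) (hp : ∀ ω, 0 ≤ p ω) (X : Ω → α)
    (x : α) : 0 ≤ pr p X x :=
  Finset.sum_nonneg (fun ω _ => by split
                                   exacts [hp ω, le_rfl])

lemma sum_pr {α : Type*} [Fintype α] [DecidableEq α] (p : Ω → ℝ) (X : Ω → α) :
    ∑ x, pr p X x = ∑ ω, p ω := by
  unfold pr
  rw [Finset.sum_comm]
  refine Finset.sum_congr rfl (fun ω _ => ?_)
  simp

lemma marg (p : Ω → ℝ) (X : Ω → 𝒳) (Y : Ω → 𝒴) (y : 𝒴) :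
    ∑ x, pr p (fun ω => (X ω, Y ω)) (x, y) = pr p Y y := by
  unfold pr
  rw [Finset.sum_comm]
  refine Finset.sum_congr rfl (fun ω _ => ?_)
  simp [Prod.ext_iff, ite_and]

lemma condH_eq (p : Ω → ℝ) (X : Ω → 𝒳) (Y : Ω → 𝒴) :
    condH p X Y = ∑ y, Gd (fun x => pr p (fun ω => (X ω, Y ω)) (x, y)) := by
  unfold condH Hent Hq Gd
  have h1 : ∑ z : 𝒳 × 𝒴, -(pr p (fun ω => (X ω, Y ω)) z *
      Real.logb 2 (pr p (fun ω => (X ω, Y ω)) z)) =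
      ∑ y, ∑ x, nml (pr p (fun ω => (X ω, Y ω)) (x, y)) := by
    rw [Fintype.sum_prod_type, Finset.sum_comm]
    rfl
  have h2 : ∀ y, pr p Y y = ∑ x, pr p (fun ω => (X ω, Y ω)) (x, y) :=
    fun y => (marg p X Y y).symm
  have h3 : ∑ yy : 𝒴, -(pr p Y yy * Real.logb 2 (pr p Y yy)) =
      ∑ y, nml (∑ x, pr p (fun ω => (X ω, Y ω)) (x, y)) :=
    Finset.sum_congr rfl (fun y _ => by rw [← h2 y]; rfl)
  rw [h1, h3, ← Finset.sum_sub_distrib]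

end Plumb

end Stmt6Aux
end

open Stmt6Aux in
/-- If `δ = Δ((X₁,Y₁),(X₂,Y₂))` is the total variation distance of the
joint distributions, then `|H(X₁|Y₁) - H(X₂|Y₂)| ≤ 1 + 6δ·log₂|𝒳|`. -/
theorem stmt_6 {Ω₁ Ω₂ 𝒳 𝒴 : Type*} [Fintype Ω₁] [Fintype Ω₂] [Fintype 𝒳] [Fintype 𝒴]
    [DecidableEq 𝒳] [DecidableEq 𝒴]
    (p₁ : Ω₁ → ℝ) (p₂ : Ω₂ → ℝ) (h₁ : IsPMF p₁) (h₂ : IsPMF p₂)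
    (X₁ : Ω₁ → 𝒳) (Y₁ : Ω₁ → 𝒴) (X₂ : Ω₂ → 𝒳) (Y₂ : Ω₂ → 𝒴) (δ : ℝ)
    (hδ : δ = TV (pr p₁ (fun ω => (X₁ ω, Y₁ ω))) (pr p₂ (fun ω => (X₂ ω, Y₂ ω)))) :
    |condH p₁ X₁ Y₁ - condH p₂ X₂ Y₂| ≤ 1 + 6 * δ * Real.logb 2 (Fintype.card 𝒳) := by
  classical
  obtain ⟨hp1, hs1⟩ := h₁
  obtain ⟨hp2, hs2⟩ := h₂
  have hΩ : Nonempty Ω₁ := by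
    rcases isEmpty_or_nonempty Ω₁ with h | h
    · exfalso; rw [Finset.univ_eq_empty, Finset.sum_empty] at hs1; norm_num at hs1
    · exact h
  have hX : Nonempty 𝒳 := ⟨X₁ (Classical.arbitrary Ω₁)⟩
  set L := Real.logb 2 (Fintype.card 𝒳) with hL
  set J₁ : 𝒳 × 𝒴 → ℝ := pr p₁ (fun ω => (X₁ ω, Y₁ ω)) with hJ1
  set J₂ : 𝒳 × 𝒴 → ℝ := pr p₂ (fun ω => (X₂ ω, Y₂ ω)) with hJ2
  have hu0 : ∀ y x, 0 ≤ J₁ (x, y) := fun y x => pr_nonneg p₁ hp1 _ _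
  have hv0 : ∀ y x, 0 ≤ J₂ (x, y) := fun y x => pr_nonneg p₂ hp2 _ _
  have hc1 : condH p₁ X₁ Y₁ = ∑ y, Gd (fun x => J₁ (x, y)) := condH_eq p₁ X₁ Y₁
  have hc2 : condH p₂ X₂ Y₂ = ∑ y, Gd (fun x => J₂ (x, y)) := condH_eq p₂ X₂ Y₂
  have hm1 : ∑ y, ∑ x, J₁ (x, y) = 1 := by
    rw [Finset.sum_comm, ← Fintype.sum_prod_type, hJ1, sum_pr, hs1]
  have hm2 : ∑ y, ∑ x, J₂ (x, y) = 1 := by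
    rw [Finset.sum_comm, ← Fintype.sum_prod_type, hJ2, sum_pr, hs2]
  have hδ2 : ∑ y, ∑ x, |J₁ (x, y) - J₂ (x, y)| = 2 * δ := by
    have hpt : ∑ z : 𝒳 × 𝒴, |J₁ z - J₂ z| = ∑ x, ∑ y, |J₁ (x, y) - J₂ (x, y)| :=
      Fintype.sum_prod_type (f := fun z : 𝒳 × 𝒴 => |J₁ z - J₂ z|)
    rw [hδ]
    unfold TV
    rw [hpt, Finset.sum_comm]
    ring
  have hδ0 : 0 ≤ δ := by
    rw [hδ]; unfold TV; positivity
  have hL0 : 0 ≤ L := by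
    rw [hL]
    refine Real.logb_nonneg one_lt_two ?_
    exact_mod_cast Fintype.card_pos (α := 𝒳)
  have hmarg : ∑ y, |(∑ x, J₁ (x, y)) - ∑ x, J₂ (x, y)| ≤ 2 * δ := by
    rw [← hδ2]
    refine Finset.sum_le_sum (fun y _ => ?_)
    rw [← Finset.sum_sub_distrib]
    exact Finset.abs_sum_le_sum_abs _ _
  by_cases hcard : 3 ≤ Fintype.card 𝒳
  · have hLlog : 1 ≤ Real.log 2 * L := by
      rw [hL]
      have hcast : Real.log 2 * Real.logb 2 (Fintype.card 𝒳) =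
          Real.log (Fintype.card 𝒳) := by
        unfold Real.logb
        field_simp
      rw [hcast]
      have hd0 : (0:ℝ) < (Fintype.card 𝒳 : ℝ) := by exact_mod_cast Fintype.card_pos (α := 𝒳)
      rw [Real.le_log_iff_exp_le hd0]
      have h3 : (3:ℝ) ≤ (Fintype.card 𝒳 : ℝ) := by exact_mod_cast hcard
      have := Real.exp_one_lt_d9
      linarith
    have main : ∀ (u v : 𝒴 → 𝒳 → ℝ), (∀ y x, 0 ≤ u y x) → (∀ y x, 0 ≤ v y x) →
        (∑ y, ∑ x, |u y x - v y x| = 2 * δ) →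
        (∑ y, |(∑ x, u y x) - ∑ x, v y x| ≤ 2 * δ) →
        (∑ y, ∑ x, v y x = 1) →
        (∑ y, Gd (u y)) - (∑ y, Gd (v y)) ≤ 1 + 6 * δ * L := by
      intro u v hu hv hsums hmargs hvm
      rw [← Finset.sum_sub_distrib]
      have step : ∑ y, (Gd (u y) - Gd (v y)) ≤
          ∑ y, ((∑ x, |u y x - v y x| + 2 * |(∑ x, u y x) - ∑ x, v y x|) * L + ∑ x, v y x) :=
        Finset.sum_le_sum (fun y _ => by
          have := keyG hLlog (u y) (v y) (hu y) (hv y)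
          rw [← hL] at this
          exact this)
      refine le_trans step ?_
      rw [Finset.sum_add_distrib, ← Finset.sum_mul, hvm, Finset.sum_add_distrib, hsums]
      have h2 : ∑ y, 2 * |(∑ x, u y x) - ∑ x, v y x| ≤ 2 * (2 * δ) := by
        rw [← Finset.mul_sum]
        linarith [hmargs]
      have hterm : (2 * δ + ∑ y, 2 * |(∑ x, u y x) - ∑ x, v y x|) * L ≤ 6 * δ * L := by
        refine mul_le_mul_of_nonneg_right ?_ hL0
        linarith
      linarith
    have dir1 := main (fun y x => J₁ (x, y)) (fun y x => J₂ (x, y)) hu0 hv0 hδ2 hmarg hm2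
    have hδ2' : ∑ y, ∑ x, |J₂ (x, y) - J₁ (x, y)| = 2 * δ := by
      rw [← hδ2]
      exact Finset.sum_congr rfl (fun y _ => Finset.sum_congr rfl (fun x _ => abs_sub_comm _ _))
    have hmarg' : ∑ y, |(∑ x, J₂ (x, y)) - ∑ x, J₁ (x, y)| ≤ 2 * δ := by
      rw [show ∑ y, |(∑ x, J₂ (x, y)) - ∑ x, J₁ (x, y)|
          = ∑ y, |(∑ x, J₁ (x, y)) - ∑ x, J₂ (x, y)| from
        Finset.sum_congr rfl (fun y _ => abs_sub_comm _ _)]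
      exact hmarg
    have dir2 := main (fun y x => J₂ (x, y)) (fun y x => J₁ (x, y)) hv0 hu0 hδ2' hmarg' hm1
    rw [hc1, hc2, abs_sub_le_iff]
    exact ⟨dir1, dir2⟩
  · push_neg at hcard
    have hL1 : L ≤ 1 := by
      rw [hL]
      have h2 : (Fintype.card 𝒳 : ℝ) ≤ 2 := by
        have : Fintype.card 𝒳 ≤ 2 := by omega
        exact_mod_cast this
      have hd0 : (0:ℝ) < (Fintype.card 𝒳 : ℝ) := by exact_mod_cast Fintype.card_pos (α := 𝒳)
      calc Real.logb 2 (Fintype.card 𝒳) ≤ Real.logb 2 2 :=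
            Real.logb_le_logb_of_le one_lt_two hd0 h2
        _ = 1 := Real.logb_self_eq_one one_lt_two
    have bound : ∀ (u : 𝒴 → 𝒳 → ℝ), (∀ y x, 0 ≤ u y x) → (∑ y, ∑ x, u y x = 1) →
        0 ≤ ∑ y, Gd (u y) ∧ ∑ y, Gd (u y) ≤ L := by
      intro u hu hum
      constructor
      · exact Finset.sum_nonneg (fun y _ => Gd_nonneg (u y) (hu y))
      · calc ∑ y, Gd (u y) ≤ ∑ y, (∑ x, u y x) * L :=
              Finset.sum_le_sum (fun y _ => by
                have := Gd_le (u y) (hu y); rw [← hL] at this; exact this)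
          _ = L := by rw [← Finset.sum_mul, hum, one_mul]
    obtain ⟨h10, h1L⟩ := bound (fun y x => J₁ (x, y)) hu0 hm1
    obtain ⟨h20, h2L⟩ := bound (fun y x => J₂ (x, y)) hv0 hm2
    rw [hc1, hc2, abs_sub_le_iff]
    have h6 : 0 ≤ 6 * δ * L := by positivity
    constructor <;> linarith

end
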